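/- For all natural numbers m ≥ 1 and d ≥ 1, one has 0 ≤ A^{(d)}(m) − G^{(d)}(m) ≤ (d−1)²/(8m), where A^{(d)}(m) = ((m+1)+(m+2)+…+(m+d))/d = m + (d+1)/2 and G^{(d)}(m) = ((m+1)(m+2)⋯(m+d))^{1/d}. -/

import Mathlib

open scoped BigOperators

set_option maxHeartbeats 1000000

lemma aux_sum_id (d : ℕ) : ∑ k ∈ Finset.range d, (k:ℝ) = d*(d-1)/2 := by
  induction d with
  | zero => simp
  | succ n ih => rw [Finset.sum_range_succ, ih]; push_cast; ring

lemma aux_sum_sq (d : ℕ) : ∑ k ∈ Finset.range d, (k:ℝ)^2 = d*(d-1)*(2*d-1)/6 := by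
  induction d with
  | zero => simp
  | succ n ih => rw [Finset.sum_range_succ, ih]; push_cast; ring

lemma aux_sum_c (d : ℕ) : ∑ k ∈ Finset.range d, (((d:ℝ)-1)/2 - k)^2 = d*((d:ℝ)^2-1)/12 := by
  have h : ∀ k ∈ Finset.range d, (((d:ℝ)-1)/2 - k)^2 = ((d:ℝ)-1)^2/4 - ((d:ℝ)-1)*k + (k:ℝ)^2 :=
    fun k _ => by ring
  rw [Finset.sum_congr rfl h, Finset.sum_add_distrib, Finset.sum_sub_distrib,
    Finset.sum_const, Finset.card_range, ← Finset.mul_sum, aux_sum_id, aux_sum_sq]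
  ring

lemma aux_amgm (d : ℕ) (hd : 1 ≤ d) (f : ℕ → ℝ) (hf : ∀ k ∈ Finset.range d, 0 ≤ f k) :
    (∏ k ∈ Finset.range d, f k) ^ ((1:ℝ)/d) ≤ (∑ k ∈ Finset.range d, f k) / d := by
  have hd0 : (0:ℝ) < d := by exact_mod_cast hd
  have h := Real.geom_mean_le_arith_mean_weighted (Finset.range d)
    (fun _ => 1/(d:ℝ)) f (fun i _ => by positivity)
    (by simp [Finset.sum_const, Finset.card_range]; field_simp) hf
  rw [Real.finset_prod_rpow _ _ hf] at h
  calc (∏ k ∈ Finset.range d, f k) ^ ((1:ℝ)/d) ≤ ∑ i ∈ Finset.range d, (1/(d:ℝ)) * f i := h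
    _ = (∑ k ∈ Finset.range d, f k) / d := by rw [← Finset.mul_sum]; ring


/-- **Lemma 2.6.** For all `m, d ≥ 1`, with `A^{(d)}(m) = ((m+1)+⋯+(m+d))/d` the arithmetic
mean and `G^{(d)}(m) = ((m+1)⋯(m+d))^{1/d}` the geometric mean of `m+1, …, m+d`, one has
`0 ≤ A^{(d)}(m) − G^{(d)}(m) ≤ (d−1)²/(8m)`. -/
theorem arithmetic_geometric_mean_gap (d m : ℕ) (hd : 1 ≤ d) (hm : 1 ≤ m) :
    0 ≤ (∑ k ∈ Finset.range d, ((m : ℝ) + 1 + (k : ℝ))) / (d : ℝ) -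
        (∏ k ∈ Finset.range d, ((m : ℝ) + 1 + (k : ℝ))) ^ ((1 : ℝ) / (d : ℝ)) ∧
    (∑ k ∈ Finset.range d, ((m : ℝ) + 1 + (k : ℝ))) / (d : ℝ) -
        (∏ k ∈ Finset.range d, ((m : ℝ) + 1 + (k : ℝ))) ^ ((1 : ℝ) / (d : ℝ)) ≤
      ((d : ℝ) - 1) ^ 2 / (8 * (m : ℝ)) := by
  have hd0 : (0:ℝ) < d := by exact_mod_cast hd
  have hm1 : (1:ℝ) ≤ m := by exact_mod_cast hm
  set P : ℝ := ∏ k ∈ Finset.range d, ((m : ℝ) + 1 + (k : ℝ)) with hPdef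
  set G : ℝ := P ^ ((1 : ℝ) / (d : ℝ)) with hGdef
  set A : ℝ := (m:ℝ) + ((d:ℝ)+1)/2 with hAdef
  have hfpos : ∀ k ∈ Finset.range d, (0:ℝ) < (m:ℝ) + 1 + k := fun k _ => by positivity
  have hfnn : ∀ k ∈ Finset.range d, (0:ℝ) ≤ (m:ℝ) + 1 + k := fun k hk => (hfpos k hk).le
  have hP : 0 < P := Finset.prod_pos hfpos
  have hG : 0 < G := Real.rpow_pos_of_pos hP _
  have hS : (∑ k ∈ Finset.range d, ((m : ℝ) + 1 + (k : ℝ))) / (d:ℝ) = A := by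
    rw [Finset.sum_add_distrib, Finset.sum_const, Finset.card_range, aux_sum_id, hAdef]
    field_simp; ring
  rw [hS]
  -- Part 1: G ≤ A
  have h1 : G ≤ A := by
    have := aux_amgm d hd _ hfnn
    rw [hS] at this; exact this
  refine ⟨by linarith, ?_⟩
  -- d = 1 case
  rcases eq_or_lt_of_le hd with hd1 | hd2
  · have hGA : G = A := by
      rw [hGdef, hPdef, hAdef, ← hd1]
      rw [Finset.prod_range_one]
      norm_num
    rw [hGA, ← hd1]; norm_num
  have hd2' : (2:ℝ) ≤ d := by exact_mod_cast hd2
  -- Part 2 setup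
  set Y : ℝ := ((m:ℝ)+1)*((m:ℝ)+d) with hYdef
  have hY : (0:ℝ) < Y := by positivity
  set y : ℕ → ℝ := fun k => ((m:ℝ) + 1 + k) * ((m:ℝ) + d - k) with hydef
  have hymin : ∀ k ∈ Finset.range d, Y ≤ y k := by
    intro k hk
    have hk'' : k < d := Finset.mem_range.mp hk
    have hk' : (k:ℝ) ≤ (d:ℝ) - 1 := by
      have : (k:ℝ) + 1 ≤ d := by exact_mod_cast hk''
      linarith
    have hk0 : (0:ℝ) ≤ k := Nat.cast_nonneg k
    simp only [hydef, hYdef]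
    nlinarith [mul_nonneg hk0 (by linarith : (0:ℝ) ≤ (d:ℝ) - 1 - k)]
  have hypos : ∀ k ∈ Finset.range d, 0 < y k := fun k hk => lt_of_lt_of_le hY (hymin k hk)
  have hrefl : ∏ k ∈ Finset.range d, ((m:ℝ) + d - k) = P := by
    rw [hPdef, ← Finset.prod_range_reflect (fun j => (m:ℝ)+1+(j:ℝ)) d]
    refine Finset.prod_congr rfl fun k hk => ?_
    have hk' : k < d := Finset.mem_range.mp hk
    have h1 : d - 1 - k = d - (k+1) := by omega
    rw [h1, Nat.cast_sub (by omega : k+1 ≤ d)]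
    push_cast; ring
  have hprodY : ∏ k ∈ Finset.range d, y k = P * P := by
    simp only [hydef]
    rw [Finset.prod_mul_distrib, hrefl, ← hPdef]
  -- HM ≤ GM
  have hmg := Real.harm_mean_le_geom_mean_weighted (Finset.range d)
    (fun _ => 1/(d:ℝ)) y (Finset.nonempty_range_iff.mpr (by omega))
    (fun i _ => by positivity)
    (by simp [Finset.sum_const, Finset.card_range]; field_simp) hypos
  rw [Real.finset_prod_rpow _ _ (fun k hk => (hypos k hk).le), hprodY,
    Real.mul_rpow hP.le hP.le, ← hGdef] at hmg
  -- bound the harmonic sum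
  set ε : ℝ := ((d:ℝ)^2 - 1)/(12*Y) with hεdef
  have hA1 : (1:ℝ) ≤ A := by rw [hAdef]; nlinarith
  have hA0 : (0:ℝ) < A := by linarith
  have hε0 : (0:ℝ) ≤ ε := by rw [hεdef]; apply div_nonneg (by nlinarith) (by positivity)
  have hsum : ∑ k ∈ Finset.range d, (1/(d:ℝ)) / y k ≤ (1 + ε) / A^2 := by
    have hpt : ∀ k ∈ Finset.range d, (1/(d:ℝ)) / y k ≤
        (1/(d:ℝ)) * ((Y + (((d:ℝ)-1)/2 - k)^2) / (A^2 * Y)) := by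
      intro k hk
      have hyk := hypos k hk
      have hykmin := hymin k hk
      have hyeq : y k = A^2 - (((d:ℝ)-1)/2 - k)^2 := by simp only [hydef, hAdef]; ring
      have key : 1 / y k ≤ (Y + (((d:ℝ)-1)/2 - k)^2) / (A^2 * Y) := by
        rw [div_le_div_iff₀ hyk (by positivity)]
        nlinarith [mul_nonneg (sq_nonneg (((d:ℝ)-1)/2 - k)) (sub_nonneg.mpr hykmin)]
      calc (1/(d:ℝ)) / y k = (1/(d:ℝ)) * (1 / y k) := by ring
        _ ≤ (1/(d:ℝ)) * ((Y + (((d:ℝ)-1)/2 - k)^2) / (A^2 * Y)) := by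
            apply mul_le_mul_of_nonneg_left key (by positivity)
    calc ∑ k ∈ Finset.range d, (1/(d:ℝ)) / y k
        ≤ ∑ k ∈ Finset.range d, (1/(d:ℝ)) * ((Y + (((d:ℝ)-1)/2 - k)^2) / (A^2 * Y)) :=
          Finset.sum_le_sum hpt
      _ = (1 + ε) / A^2 := by
          rw [← Finset.mul_sum, ← Finset.sum_div, Finset.sum_add_distrib, Finset.sum_const,
            Finset.card_range, aux_sum_c, hεdef]
          field_simp
          ring
  -- combine: A^2 ≤ G*G*(1+ε)
  have hsumpos : 0 < ∑ k ∈ Finset.range d, (1/(d:ℝ)) / y k := by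
    apply Finset.sum_pos (fun k hk => div_pos (by positivity) (hypos k hk)) (Finset.nonempty_range_iff.mpr (by omega))
  have hkey : A^2 ≤ G * G * (1 + ε) := by
    have h2 : ((1 + ε) / A^2)⁻¹ ≤ (∑ k ∈ Finset.range d, (1/(d:ℝ)) / y k)⁻¹ :=
      inv_anti₀ hsumpos hsum
    have h3 : A^2 / (1 + ε) ≤ G * G := by
      calc A^2 / (1 + ε) = ((1 + ε) / A^2)⁻¹ := by rw [inv_div]
        _ ≤ (∑ k ∈ Finset.range d, (1/(d:ℝ)) / y k)⁻¹ := h2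
        _ ≤ G * G := hmg
    rw [div_le_iff₀ (by linarith)] at h3
    linarith
  -- conclude
  have hAG : A - G ≤ A * ε / 2 := by
    by_cases h2 : ε ≤ 2
    · have h3 : (1 + ε) * (1 - ε/2)^2 ≤ 1 := by nlinarith [sq_nonneg ε, mul_nonneg (mul_nonneg hε0 hε0) (by linarith : (0:ℝ) ≤ 2 - ε)]
      have h4 : (A * (1 - ε/2))^2 ≤ G^2 := by
        have hint1 := mul_le_mul_of_nonneg_right hkey (sq_nonneg (1 - ε/2))
        have hint2 := mul_le_mul_of_nonneg_left h3 (mul_pos hG hG).le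
        nlinarith [hint1, hint2]
      have h5 : A * (1 - ε/2) ≤ G := by nlinarith [sq_nonneg (A*(1-ε/2) - G)]
      linarith
    · push_neg at h2; nlinarith
  have hfinal : A * ε / 2 ≤ ((d:ℝ) - 1)^2 / (8 * m) := by
    have heq : A * ε / 2 = (A * ((d:ℝ)^2 - 1)) / (24 * Y) := by rw [hεdef, mul_div_assoc', div_div]; congr 1; ring
    rw [heq, div_le_div_iff₀ (by positivity) (by positivity), hAdef, hYdef]
    nlinarith [mul_nonneg (mul_nonneg (by linarith : (0:ℝ) ≤ (d:ℝ)-2) (by linarith : (0:ℝ) ≤ (d:ℝ)-1)) (by nlinarith : (0:ℝ) ≤ (m:ℝ)^2),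
      mul_nonneg (by linarith : (0:ℝ) ≤ (d:ℝ)-1) (by linarith : (0:ℝ) ≤ (m:ℝ)-1),
      mul_pos hd0 (by positivity : (0:ℝ) < (m:ℝ)),
      sq_nonneg ((d:ℝ)-1), sq_nonneg ((m:ℝ)-1)]
  linarith
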